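/- For b ∈ ℤ_{>0}^n, two distinct points v = π(y_k) and w (with π ∈ S_n, b_1 ≥ 2 or k ≥ 2) that are adjacent vertices of X_n(b) have difference vector w - v equal to one of: (S_k - 1)·e_{π(j)} for some 1 ≤ j ≤ k; b_j·(e_{π(j-1)} - e_{π(j)}) for some k+2 ≤ j ≤ n; or -(S_{k+1} - 1)·e_{π(k+1)} (the last only if k ≤ n-1). In particular, every edge of X_n(b) is parallel to a root of the root system B_n (i.e., to ±e_i or e_i - e_j). -/

import Mathlib

/-- Partial sum `S_i = b_1 + ⋯ + b_i`, where `b j` denotes `b_{j+1}` (0-indexed). -/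
def Spart (b : ℕ → ℕ) (i : ℕ) : ℕ := ∑ j ∈ Finset.range i, b j

/-- A `b`-parking function. -/
def IsBParkingFunction (n : ℕ) (b : ℕ → ℕ) (β : Fin n → ℕ) : Prop :=
  (∀ i, 1 ≤ β i) ∧ ∃ σ : Equiv.Perm (Fin n),
    Monotone (β ∘ σ) ∧ ∀ i : Fin n, β (σ i) ≤ Spart b ((i : ℕ) + 1)

/-- The `b`-parking-function polytope. -/
noncomputable def bpfPolytope (n : ℕ) (b : ℕ → ℕ) : Set (Fin n → ℝ) :=
  convexHull ℝ {x | ∃ β : Fin n → ℕ, IsBParkingFunction n b β ∧ x = fun i => (β i : ℝ)}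


lemma Spart_mono (b : ℕ → ℕ) : Monotone (Spart b) := fun _ _ h =>
  Finset.sum_le_sum_of_subset (Finset.range_subset_range.2 h)

lemma Spart_lt (n : ℕ) (b : ℕ → ℕ) (hb : ∀ j < n, 1 ≤ b j) {m m' : ℕ}
    (h : m < m') (h' : m' ≤ n) : Spart b m < Spart b m' := by
  have : Spart b (m+1) ≤ Spart b m' := Spart_mono b h
  have hbm : 1 ≤ b m := hb m (lt_of_lt_of_le h h')
  have : Spart b m + 1 ≤ Spart b (m+1) := by
    unfold Spart; rw [Finset.sum_range_succ]; omega
  omega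

lemma one_le_Spart (n : ℕ) (b : ℕ → ℕ) (hb : ∀ j < n, 1 ≤ b j) {m : ℕ}
    (h : 1 ≤ m) (h' : m ≤ n) : 1 ≤ Spart b m := by
  have := Spart_lt n b hb (show 0 < m from h) h'
  have h0 : Spart b 0 = 0 := by simp [Spart]
  omega

lemma two_le_Spart (n : ℕ) (b : ℕ → ℕ) (hb : ∀ j < n, 1 ≤ b j)
    (hcase : 2 ≤ b 0 ∨ 2 ≤ k) {m : ℕ} (h : 1 ≤ m) (hkm : k ≤ m) (h' : m ≤ n) :
    2 ≤ Spart b m := by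
  rcases hcase with hc | hc
  · have : Spart b 1 ≤ Spart b m := Spart_mono b h
    have : b 0 ≤ Spart b 1 := by simp [Spart]
    omega
  · have h2 : 2 ≤ m := le_trans hc hkm
    have h1 : Spart b 1 < Spart b 2 := Spart_lt n b hb one_lt_two (le_trans h2 h')
    have h0 : 1 ≤ Spart b 1 := one_le_Spart n b hb le_rfl (by omega)
    have := Spart_mono b h2
    omega

/-- membership of a pattern point in the generating set -/
lemma mem_gen (n : ℕ) (b : ℕ → ℕ) (π : Equiv.Perm (Fin n)) (f : Fin n → ℕ)
    (ρ : Equiv.Perm (Fin n)) (h1 : ∀ i, 1 ≤ f i) (h2 : Monotone (f ∘ ρ))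
    (h3 : ∀ i : Fin n, f (ρ i) ≤ Spart b ((i : ℕ) + 1)) :
    (fun i => ((f (π⁻¹ i) : ℕ) : ℝ)) ∈
      {x : Fin n → ℝ | ∃ β : Fin n → ℕ, IsBParkingFunction n b β ∧ x = fun i => (β i : ℝ)} := by
  refine ⟨fun i => f (π⁻¹ i), ⟨fun i => h1 _, ρ.trans π, ?_, ?_⟩, rfl⟩
  · have : ((fun i => f (π⁻¹ i)) ∘ (ρ.trans π)) = f ∘ ρ := by
      funext i; simp [Equiv.trans_apply]
    rw [this]; exact h2
  · intro i; simpa using h3 i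

def gpat (b : ℕ → ℕ) (m : ℕ) {n : ℕ} : Fin n → ℕ := fun i => if (i : ℕ) < m then 1 else Spart b ((i : ℕ) + 1)

lemma gpat_one_le (n : ℕ) (b : ℕ → ℕ) (hb : ∀ j < n, 1 ≤ b j) (m : ℕ) (i : Fin n) :
    1 ≤ gpat b m i := by
  unfold gpat
  split
  · exact le_rfl
  · exact one_le_Spart n b hb (by omega) i.isLt

lemma gpat_monotone (n : ℕ) (b : ℕ → ℕ) (hb : ∀ j < n, 1 ≤ b j) (m : ℕ) :
    Monotone (gpat b m (n := n)) := by
  intro i i' hle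
  unfold gpat
  rcases lt_or_ge (i : ℕ) m with h | h <;> rcases lt_or_ge (i' : ℕ) m with h' | h'
  · simp [h, h']
  · simp only [if_pos h, if_neg (not_lt.2 h')]
    exact one_le_Spart n b hb (by omega) i'.isLt
  · exact absurd (lt_of_le_of_lt (le_trans h (Fin.le_iff_val_le_val.1 hle)) h') (lt_irrefl _)
  · simp only [if_neg (not_lt.2 h), if_neg (not_lt.2 h')]
    exact Spart_mono b (by have := Fin.le_iff_val_le_val.1 hle; omega)

lemma gpat_bound (n : ℕ) (b : ℕ → ℕ) (hb : ∀ j < n, 1 ≤ b j) (m : ℕ) (i : Fin n) :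
    gpat b m i ≤ Spart b ((i : ℕ) + 1) := by
  unfold gpat
  split
  · exact one_le_Spart n b hb (by omega) i.isLt
  · exact le_rfl

open Finset in
lemma card_filter_ge (n m : ℕ) :
    ((Finset.univ : Finset (Fin n)).filter (fun i : Fin n => m ≤ (i : ℕ))).card = n - m := by
  have himg : ((Finset.univ : Finset (Fin n)).filter (fun i : Fin n => m ≤ (i : ℕ))).image Fin.val
      = Finset.Ico m n := by
    ext a
    simp only [Finset.mem_image, Finset.mem_filter, Finset.mem_univ, true_and, Finset.mem_Ico]
    constructor
    · rintro ⟨i, hi, rfl⟩; exact ⟨hi, i.isLt⟩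
    · rintro ⟨h1, h2⟩; exact ⟨⟨a, h2⟩, h1, rfl⟩
  have := Finset.card_image_of_injective
    ((Finset.univ : Finset (Fin n)).filter (fun i : Fin n => m ≤ (i : ℕ))) (Fin.val_injective)
  rw [himg, Nat.card_Ico] at this
  omega

/-- counting lemma : at most `n - m` coordinates of a parking function exceed `S m`. -/
lemma count_exceed (n : ℕ) (b : ℕ → ℕ) (β : Fin n → ℕ)
    (hβ : IsBParkingFunction n b β) (m : ℕ) :
    ((Finset.univ : Finset (Fin n)).filter (fun i => Spart b m < β i)).card ≤ n - m := by
  obtain ⟨-, σ, -, hbd⟩ := hβ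
  set T := (Finset.univ : Finset (Fin n)).filter (fun i => Spart b m < β i) with hT
  have hsub : T.image (⇑σ⁻¹) ⊆ (Finset.univ : Finset (Fin n)).filter (fun i : Fin n => m ≤ (i : ℕ)) := by
    intro t ht
    simp only [Finset.mem_image] at ht
    obtain ⟨i, hi, rfl⟩ := ht
    simp only [hT, Finset.mem_filter, Finset.mem_univ, true_and] at hi ⊢
    by_contra hlt
    push_neg at hlt
    have h1 : β (σ (σ.symm i)) ≤ Spart b ((σ.symm i : ℕ) + 1) := hbd _
    rw [Equiv.apply_symm_apply] at h1
    have h2 : Spart b ((σ⁻¹ i : ℕ) + 1) ≤ Spart b m := Spart_mono b (by omega)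
    simp only [Equiv.Perm.inv_def] at h1 h2 hlt
    omega
  have hcard := Finset.card_le_card hsub
  rw [Finset.card_image_of_injective _ (Equiv.injective σ⁻¹), card_filter_ge] at hcard
  exact hcard

/-- sum over any subset of size ≤ a of a monotone function is at most the sum over the top `a`. -/
lemma sum_subset_le_top (n : ℕ) (f : Fin n → ℕ) (hf : Monotone f) :
    ∀ (a : ℕ) (V : Finset (Fin n)), V.card ≤ a →
      ∑ t ∈ V, f t ≤ ∑ t ∈ (Finset.univ : Finset (Fin n)).filter (fun i : Fin n => n - a ≤ (i : ℕ)), f t := by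
  intro a
  induction a with
  | zero => intro V hV
            rw [Finset.card_eq_zero.1 (Nat.le_zero.1 hV)]
            simp
  | succ a ih =>
    intro V hV
    rcases le_or_gt V.card a with h | h
    · refine le_trans (ih V h) (Finset.sum_le_sum_of_subset ?_)
      intro t ht
      simp only [Finset.mem_filter, Finset.mem_univ, true_and] at ht ⊢
      omega
    · have hcard : V.card = a + 1 := by omega
      have hne : V.Nonempty := Finset.card_pos.1 (by omega)
      have hn0 : 0 < n := by
        obtain ⟨t, -⟩ := hne; exact t.pos
      set r0 := V.min' hne with hr0
      have hr0mem : r0 ∈ V := V.min'_mem hne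
      have hr0le : (r0 : ℕ) ≤ n - a - 1 := by
        have hsub : V ⊆ (Finset.univ : Finset (Fin n)).filter (fun i : Fin n => (r0 : ℕ) ≤ (i : ℕ)) := by
          intro t ht
          simp only [Finset.mem_filter, Finset.mem_univ, true_and]
          exact Fin.le_iff_val_le_val.1 (V.min'_le t ht)
        have := Finset.card_le_card hsub
        rw [card_filter_ge] at this
        omega
      rcases le_or_gt n a with hna | hna
      · -- top set is everything
        have : n - (a+1) = 0 := by omega
        rw [this]
        refine Finset.sum_le_sum_of_subset ?_
        intro t ht
        simp
      · have hsplit : (Finset.univ : Finset (Fin n)).filter (fun i : Fin n => n - (a+1) ≤ (i : ℕ))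
            = insert (⟨n - a - 1, by omega⟩ : Fin n)
              ((Finset.univ : Finset (Fin n)).filter (fun i : Fin n => n - a ≤ (i : ℕ))) := by
          ext t
          simp only [Finset.mem_insert, Finset.mem_filter, Finset.mem_univ, true_and, Fin.ext_iff]
          omega
        rw [hsplit, Finset.sum_insert (by
          simp only [Finset.mem_filter, Finset.mem_univ, true_and]
          omega)]
        rw [← Finset.add_sum_erase V f hr0mem]
        have h1 : f r0 ≤ f ⟨n - a - 1, by omega⟩ := hf (by
          simpa [Fin.le_iff_val_le_val] using hr0le)
        have h2 := ih (V.erase r0) (by rw [Finset.card_erase_of_mem hr0mem]; omega)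
        omega

/-- sum of the coordinates of a parking function over any set of size `n - m` indices
  is at most `S_{m+1} + ⋯ + S_n`. -/
lemma sum_part_le (n : ℕ) (b : ℕ → ℕ) (β : Fin n → ℕ) (hβ : IsBParkingFunction n b β)
    (π : Equiv.Perm (Fin n)) (m : ℕ) :
    ∑ i ∈ (Finset.univ : Finset (Fin n)).filter (fun i : Fin n => m ≤ (i : ℕ)), β (π i)
      ≤ ∑ i ∈ (Finset.univ : Finset (Fin n)).filter (fun i : Fin n => m ≤ (i : ℕ)),
          Spart b ((i : ℕ) + 1) := by
  obtain ⟨-, σ, -, hbd⟩ := hβ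
  set F := (Finset.univ : Finset (Fin n)).filter (fun i : Fin n => m ≤ (i : ℕ)) with hF
  have hinj : Function.Injective (fun i : Fin n => σ⁻¹ (π i)) := fun i j h => by
    simpa using (Equiv.injective π (Equiv.injective σ⁻¹ h))
  have h1 : ∑ i ∈ F, β (π i) = ∑ t ∈ F.image (fun i => σ⁻¹ (π i)), β (σ t) := by
    rw [Finset.sum_image (fun x _ y _ h => hinj h)]
    simp
  rw [h1]
  refine le_trans (Finset.sum_le_sum (fun t _ => hbd t)) ?_
  have hcard : (F.image (fun i => σ⁻¹ (π i))).card ≤ n - m := by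
    rw [Finset.card_image_of_injective _ hinj, hF, card_filter_ge]
  have hmono : Monotone (fun i : Fin n => Spart b ((i : ℕ) + 1)) := by
    intro i j hij
    exact Spart_mono b (by have := Fin.le_iff_val_le_val.1 hij; omega)
  have := sum_subset_le_top n _ hmono (n - m) _ hcard
  refine le_trans this (le_of_eq ?_)
  rcases le_or_gt m n with h | h
  · rw [hF]
    congr 1
    ext t
    simp only [Finset.mem_filter, Finset.mem_univ, true_and]
    omega
  · have : F = ∅ := by
      rw [hF]; ext t
      simp only [Finset.mem_filter, Finset.mem_univ, true_and, Finset.notMem_empty, iff_false]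
      have := t.isLt; omega
    have h2 : (Finset.univ : Finset (Fin n)).filter (fun i : Fin n => n - (n - m) ≤ (i : ℕ)) = ∅ := by
      ext t
      simp only [Finset.mem_filter, Finset.mem_univ, true_and, Finset.notMem_empty, iff_false]
      have := t.isLt; omega
    rw [this, h2]

lemma clm_formula (n : ℕ) (l : (Fin n → ℝ) →L[ℝ] ℝ) (x : Fin n → ℝ) :
    l x = ∑ j, x j * l (Pi.single j (1 : ℝ)) := by
  conv_lhs => rw [pi_eq_sum_univ x, map_sum]
  refine Finset.sum_congr rfl (fun j _ => ?_)
  have h : (fun i => if j = i then (1:ℝ) else 0) = Pi.single j (1:ℝ) := by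
    funext i; simp [Pi.single_apply, eq_comm]
  rw [map_smul, ← h]
  simp

lemma seg_dir {E : Type*} [AddCommGroup E] [Module ℝ E] {v w u : E}
    (h : u ∈ segment ℝ v w) (hne : u ≠ v) :
    ∃ t : ℝ, 1 ≤ t ∧ w - v = t • (u - v) := by
  obtain ⟨a, c, ha, hc, hac, hu⟩ := h
  have hc0 : c ≠ 0 := by
    rintro rfl
    apply hne
    rw [← hu]
    have : a = 1 := by linarith
    simp [this]
  have hdir : u - v = c • (w - v) := by
    rw [← hu, smul_sub]
    have : a = 1 - c := by linarith
    rw [this]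
    module
  refine ⟨c⁻¹, ?_, ?_⟩
  · have hcpos : 0 < c := lt_of_le_of_ne hc (Ne.symm hc0)
    have hc1 : c ≤ 1 := by linarith
    calc (1:ℝ) = c / c := (div_self hc0).symm
    _ ≤ 1 / c := by gcongr
    _ = c⁻¹ := one_div c
  · rw [hdir, smul_smul, inv_mul_cancel₀ hc0, one_smul]

lemma filter_ge_empty (n m : ℕ) (h : n ≤ m) :
    (Finset.univ : Finset (Fin n)).filter (fun i : Fin n => m ≤ (i : ℕ)) = ∅ := by
  ext t
  simp only [Finset.mem_filter, Finset.mem_univ, true_and, Finset.notMem_empty, iff_false]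
  have := t.isLt; omega

lemma filter_ge_succ (n m : ℕ) (h : m < n) :
    (Finset.univ : Finset (Fin n)).filter (fun i : Fin n => m ≤ (i : ℕ))
      = insert (⟨m, h⟩ : Fin n)
          ((Finset.univ : Finset (Fin n)).filter (fun i : Fin n => m + 1 ≤ (i : ℕ))) := by
  ext t
  simp only [Finset.mem_filter, Finset.mem_univ, true_and, Finset.mem_insert, Fin.ext_iff]
  omega

lemma mk_not_mem_filter_succ (n m : ℕ) (h : m < n) :
    (⟨m, h⟩ : Fin n) ∉
      (Finset.univ : Finset (Fin n)).filter (fun i : Fin n => m + 1 ≤ (i : ℕ)) := by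
  simp

lemma abel_identity (n : ℕ) (E : Fin n → ℝ) (cc : ℕ → ℝ) :
    ∀ (t m : ℕ), n ≤ m + t →
      ∑ i ∈ (Finset.univ : Finset (Fin n)).filter (fun i : Fin n => m ≤ (i : ℕ)), E i * cc (i : ℕ)
        = cc m * (∑ i ∈ (Finset.univ : Finset (Fin n)).filter (fun i : Fin n => m ≤ (i : ℕ)), E i)
          + ∑ j ∈ Finset.Ico (m + 1) n, (cc j - cc (j - 1)) *
              (∑ i ∈ (Finset.univ : Finset (Fin n)).filter (fun i : Fin n => j ≤ (i : ℕ)), E i) := by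
  intro t
  induction t with
  | zero =>
    intro m hm
    rw [filter_ge_empty n m (by omega), Finset.Ico_eq_empty (by omega)]
    simp
  | succ t ih =>
    intro m hm
    rcases le_or_gt n (m + t) with h | h
    · exact ih m h
    have hmn : m < n := by omega
    have hn : n = m + t + 1 := by omega
    rw [filter_ge_succ n m hmn, Finset.sum_insert (mk_not_mem_filter_succ n m hmn),
      Finset.sum_insert (mk_not_mem_filter_succ n m hmn), ih (m + 1) (by omega)]
    rcases Nat.eq_zero_or_pos t with rfl | ht
    · have he := filter_ge_empty n (m + 1) (by omega)
      rw [he]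
      rw [show Finset.Ico (m + 1) n = ∅ from Finset.Ico_eq_empty (by omega),
        show Finset.Ico (m + 1 + 1) n = ∅ from Finset.Ico_eq_empty (by omega)]
      simp
      ring
    · have hbot : m + 1 < n := by omega
      rw [Finset.sum_eq_sum_Ico_succ_bot hbot]
      simp only [Nat.add_sub_cancel]
      ring

lemma gpat_mem (n : ℕ) (b : ℕ → ℕ) (hb : ∀ j < n, 1 ≤ b j) (π : Equiv.Perm (Fin n)) (m : ℕ) :
    (fun i => ((gpat b m (π⁻¹ i) : ℕ) : ℝ)) ∈ bpfPolytope n b := by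
  apply subset_convexHull
  exact mem_gen n b π (gpat b m) (Equiv.refl _) (gpat_one_le n b hb m)
    (by simpa using gpat_monotone n b hb m) (fun i => by simpa using gpat_bound n b hb m i)

lemma f1_sorted (n : ℕ) (b : ℕ → ℕ) (k : ℕ) (hk : k ≤ n) (j : Fin n) (hj : (j : ℕ) < k) :
    ((fun i => if i = j then Spart b k else gpat b k i) ∘
      (Equiv.swap j (⟨k - 1, by omega⟩ : Fin n))) = gpat b (k - 1) := by
  have hk1 : 1 ≤ k := by omega
  funext i
  simp only [Function.comp_apply]
  set K : Fin n := ⟨k - 1, by omega⟩ with hK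
  rcases eq_or_ne i j with rfl | h1
  · rw [Equiv.swap_apply_left]
    rcases eq_or_ne K i with he | hne'
    · rw [if_pos he]
      have : (i : ℕ) = k - 1 := by rw [← he]
      simp only [gpat, this, if_neg (by omega : ¬ (k - 1 < k - 1))]
      congr 1
      omega
    · rw [if_neg hne']
      have hKv : (K : ℕ) = k - 1 := rfl
      have hiv : (i : ℕ) ≠ k - 1 := by
        intro h
        apply hne'
        apply Fin.ext
        show k - 1 = (i : ℕ)
        omega
      simp only [gpat, hKv, if_pos (by omega : k - 1 < k), if_pos (by omega : (i : ℕ) < k - 1)]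
  · rcases eq_or_ne i K with rfl | h2
    · rw [Equiv.swap_apply_right, if_pos rfl]
      simp only [gpat, show (K : ℕ) = k - 1 from rfl, if_neg (by omega : ¬ (k - 1 < k - 1))]
      congr 1
      omega
    · rw [Equiv.swap_apply_of_ne_of_ne h1 h2]
      rw [if_neg h1]
      have hiv : (i : ℕ) ≠ k - 1 := by
        intro h
        apply h2
        apply Fin.ext
        show (i : ℕ) = k - 1
        omega
      simp only [gpat]
      rcases lt_or_ge (i : ℕ) k with h | h
      · rw [if_pos h, if_pos (by omega)]
      · rw [if_neg (by omega), if_neg (by omega)]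

lemma f1_mem (n : ℕ) (b : ℕ → ℕ) (hb : ∀ j < n, 1 ≤ b j) (π : Equiv.Perm (Fin n))
    (k : ℕ) (hk : k ≤ n) (j : Fin n) (hj : (j : ℕ) < k) :
    (fun i => (((if π⁻¹ i = j then Spart b k else gpat b k (π⁻¹ i)) : ℕ) : ℝ)) ∈
      bpfPolytope n b := by
  apply subset_convexHull
  have := mem_gen n b π (fun i => if i = j then Spart b k else gpat b k i)
    (Equiv.swap j (⟨k - 1, by omega⟩ : Fin n))
    (fun i => by
      split
      · exact one_le_Spart n b hb (by omega) hk
      · exact gpat_one_le n b hb k i)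
    (by rw [f1_sorted n b k hk j hj]; exact gpat_monotone n b hb (k - 1))
    (fun i => by
      have h := congrFun (f1_sorted n b k hk j hj) i
      simp only [Function.comp_apply] at h
      rw [h]
      exact gpat_bound n b hb (k - 1) i)
  exact this

lemma f2_mem (n : ℕ) (b : ℕ → ℕ) (hb : ∀ j < n, 1 ≤ b j) (π : Equiv.Perm (Fin n))
    (k : ℕ) (m : ℕ) (hm1 : k + 1 ≤ m) (hm2 : m < n) :
    (fun i => ((gpat b k (Equiv.swap (⟨m - 1, by omega⟩ : Fin n) (⟨m, hm2⟩ : Fin n) (π⁻¹ i)) : ℕ) : ℝ))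
      ∈ bpfPolytope n b := by
  apply subset_convexHull
  have := mem_gen n b π (fun i => gpat b k (Equiv.swap (⟨m - 1, by omega⟩ : Fin n) (⟨m, hm2⟩ : Fin n) i))
    (Equiv.swap (⟨m - 1, by omega⟩ : Fin n) (⟨m, hm2⟩ : Fin n))
    (fun i => gpat_one_le n b hb k _)
    (by
      have : ((fun i => gpat b k (Equiv.swap (⟨m - 1, by omega⟩ : Fin n) (⟨m, hm2⟩ : Fin n) i)) ∘
          (Equiv.swap (⟨m - 1, by omega⟩ : Fin n) (⟨m, hm2⟩ : Fin n))) = gpat b k := by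
        funext i
        simp [Equiv.swap_apply_self]
      rw [this]
      exact gpat_monotone n b hb k)
    (fun i => by
      rw [Equiv.swap_apply_self]
      exact gpat_bound n b hb k i)
  exact this

lemma diff1 (n : ℕ) (b : ℕ → ℕ) (π : Equiv.Perm (Fin n)) (k : ℕ) (j : Fin n)
    (hj : (j : ℕ) < k) :
    (fun i => (((if π⁻¹ i = j then Spart b k else gpat b k (π⁻¹ i)) : ℕ) : ℝ))
      = (fun i => ((gpat b k (π⁻¹ i) : ℕ) : ℝ))
        + ((Spart b k : ℝ) - 1) • (Pi.single (π j) (1 : ℝ) : Fin n → ℝ) := by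
  funext i
  simp only [Pi.add_apply, Pi.smul_apply, smul_eq_mul]
  rcases eq_or_ne i (π j) with rfl | h
  · rw [Pi.single_eq_same, if_pos (by simp)]
    have : gpat b k (π⁻¹ (π j)) = 1 := by
      simp only [Equiv.Perm.coe_inv, Equiv.symm_apply_apply, gpat, if_pos hj]
    rw [this]
    push_cast
    ring
  · rw [Pi.single_eq_of_ne h, if_neg (by
      intro hc
      exact h (by rw [← hc, Equiv.Perm.coe_inv, Equiv.apply_symm_apply]))]
    ring

lemma diff2 (n : ℕ) (b : ℕ → ℕ) (π : Equiv.Perm (Fin n)) (k m : ℕ)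
    (hm1 : k + 1 ≤ m) (hm2 : m < n) :
    (fun i => ((gpat b k (Equiv.swap (⟨m - 1, by omega⟩ : Fin n) (⟨m, hm2⟩ : Fin n) (π⁻¹ i)) : ℕ) : ℝ))
      = (fun i => ((gpat b k (π⁻¹ i) : ℕ) : ℝ))
        + (b m : ℝ) • ((Pi.single (π (⟨m - 1, by omega⟩ : Fin n)) (1 : ℝ) : Fin n → ℝ)
            - (Pi.single (π (⟨m, hm2⟩ : Fin n)) (1 : ℝ) : Fin n → ℝ)) := by
  have hmm : (⟨m - 1, by omega⟩ : Fin n) ≠ (⟨m, hm2⟩ : Fin n) := by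
    intro h
    have := congrArg Fin.val h
    simp only at this
    omega
  have hSm : Spart b (m + 1) = Spart b m + b m := by
    unfold Spart; rw [Finset.sum_range_succ]
  funext i
  simp only [Pi.add_apply, Pi.smul_apply, Pi.sub_apply, smul_eq_mul]
  rcases eq_or_ne i (π (⟨m - 1, by omega⟩ : Fin n)) with rfl | h1
  · rw [Pi.single_eq_same, Pi.single_eq_of_ne (by
      intro hc
      exact hmm (π.injective hc))]
    simp only [Equiv.Perm.coe_inv, Equiv.symm_apply_apply, Equiv.swap_apply_left]
    simp only [gpat, if_neg (by simp only []; omega : ¬ (((⟨m, hm2⟩ : Fin n) : ℕ) < k)),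
      if_neg (by simp only []; omega : ¬ (((⟨m - 1, by omega⟩ : Fin n) : ℕ) < k))]
    rw [show ((⟨m - 1, by omega⟩ : Fin n) : ℕ) + 1 = m from by simp only []; omega, hSm]
    push_cast
    ring
  · rcases eq_or_ne i (π (⟨m, hm2⟩ : Fin n)) with rfl | h2
    · rw [Pi.single_eq_same, Pi.single_eq_of_ne (by
        intro hc
        exact hmm (π.injective hc).symm)]
      simp only [Equiv.Perm.coe_inv, Equiv.symm_apply_apply, Equiv.swap_apply_right]
      simp only [gpat, if_neg (by simp only []; omega : ¬ (((⟨m, hm2⟩ : Fin n) : ℕ) < k)),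
        if_neg (by simp only []; omega : ¬ (((⟨m - 1, by omega⟩ : Fin n) : ℕ) < k))]
      rw [show ((⟨m - 1, by omega⟩ : Fin n) : ℕ) + 1 = m from by simp only []; omega,
        show ((⟨m, hm2⟩ : Fin n) : ℕ) + 1 = m + 1 from rfl, hSm]
      push_cast
      ring
    · have hs1 : π⁻¹ i ≠ (⟨m - 1, by omega⟩ : Fin n) := by
        intro hc
        exact h1 (by rw [← hc, Equiv.Perm.coe_inv, Equiv.apply_symm_apply])
      have hs2 : π⁻¹ i ≠ (⟨m, hm2⟩ : Fin n) := by
        intro hc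
        exact h2 (by rw [← hc, Equiv.Perm.coe_inv, Equiv.apply_symm_apply])
      rw [Equiv.swap_apply_of_ne_of_ne hs1 hs2, Pi.single_eq_of_ne h1, Pi.single_eq_of_ne h2]
      ring

lemma diff3 (n : ℕ) (b : ℕ → ℕ) (π : Equiv.Perm (Fin n)) (k : ℕ) (hkn : k < n) :
    (fun i => ((gpat b (k + 1) (π⁻¹ i) : ℕ) : ℝ))
      = (fun i => ((gpat b k (π⁻¹ i) : ℕ) : ℝ))
        + (-((Spart b (k + 1) : ℝ) - 1)) • (Pi.single (π (⟨k, hkn⟩ : Fin n)) (1 : ℝ) : Fin n → ℝ) := by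
  funext i
  simp only [Pi.add_apply, Pi.smul_apply, smul_eq_mul]
  rcases eq_or_ne i (π (⟨k, hkn⟩ : Fin n)) with rfl | h
  · rw [Pi.single_eq_same]
    simp only [Equiv.Perm.coe_inv, Equiv.symm_apply_apply]
    simp only [gpat, if_pos (by simp only []; omega : ((⟨k, hkn⟩ : Fin n) : ℕ) < k + 1),
      if_neg (by simp only []; omega : ¬ (((⟨k, hkn⟩ : Fin n) : ℕ) < k))]
    push_cast
    ring
  · have hs : π⁻¹ i ≠ (⟨k, hkn⟩ : Fin n) := by
      intro hc
      exact h (by rw [← hc, Equiv.Perm.coe_inv, Equiv.apply_symm_apply])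
    rw [Pi.single_eq_of_ne h]
    have hv : (π⁻¹ i : ℕ) ≠ k := by
      intro hc
      exact hs (Fin.ext hc)
    have : gpat b (k + 1) (π⁻¹ i) = gpat b k (π⁻¹ i) := by
      simp only [gpat]
      rcases lt_or_ge ((π⁻¹ i : Fin n) : ℕ) k with hl | hl
      · rw [if_pos (by omega), if_pos hl]
      · rw [if_neg (by omega), if_neg (by omega)]
    rw [this]
    ring

set_option maxHeartbeats 2000000 in
/-- The edge directions from a vertex `v = π(y_k)` (with `b_1 ≥ 2` or `k ≥ 2`):
if `w` is a vertex adjacent to `v` (i.e. `segment v w` is an edge of `X_n(b)`),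
then `w - v` equals `(S_k - 1)·e_{π(j)}` for some `1 ≤ j ≤ k`, or
`b_j·(e_{π(j-1)} - e_{π(j)})` for some `k+2 ≤ j ≤ n`, or
`-(S_{k+1} - 1)·e_{π(k+1)}` (only if `k ≤ n-1`). In particular every edge is
parallel to a root of `B_n`. -/
theorem edge_directions (n : ℕ) (b : ℕ → ℕ) (hb : ∀ j < n, 1 ≤ b j)
    (k : ℕ) (hk : k ≤ n) (π : Equiv.Perm (Fin n))
    (hcase : 2 ≤ b 0 ∨ 2 ≤ k)
    (v w : Fin n → ℝ)
    (hv : v = fun i => if ((π⁻¹ i : Fin n) : ℕ) < k then (1 : ℝ)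
      else (Spart b (((π⁻¹ i : Fin n) : ℕ) + 1) : ℝ))
    (hvvert : v ∈ Set.extremePoints ℝ (bpfPolytope n b))
    (hwvert : w ∈ Set.extremePoints ℝ (bpfPolytope n b))
    (hne : v ≠ w)
    (hedge : IsExposed ℝ (bpfPolytope n b) (segment ℝ v w)) :
    (∃ j : Fin n, (j : ℕ) < k ∧
      w - v = ((Spart b k : ℝ) - 1) • (Pi.single (π j) (1 : ℝ) : Fin n → ℝ)) ∨
    (∃ i : Fin n, ∃ h : k + 1 ≤ (i : ℕ),
      w - v = (b (i : ℕ) : ℝ) •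
        ((Pi.single (π ⟨(i : ℕ) - 1, Nat.lt_of_le_of_lt (Nat.sub_le _ _) i.isLt⟩) (1 : ℝ) : Fin n → ℝ)
          - (Pi.single (π i) (1 : ℝ) : Fin n → ℝ))) ∨
    (∃ h : k < n,
      w - v = -((Spart b (k + 1) : ℝ) - 1) • (Pi.single (π ⟨k, h⟩) (1 : ℝ) : Fin n → ℝ)) := by
  classical
  rcases Nat.eq_zero_or_pos n with rfl | hn0
  · exact absurd (funext fun i => i.elim0) hne
  have hvseg : v ∈ segment ℝ v w := left_mem_segment ℝ v w
  obtain ⟨l, hface⟩ := hedge ⟨v, hvseg⟩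
  have hvmax : v ∈ bpfPolytope n b ∧ ∀ y ∈ bpfPolytope n b, l y ≤ l v := by
    have h := hvseg; rw [hface] at h; exact h
  have hwmax : w ∈ bpfPolytope n b ∧ ∀ y ∈ bpfPolytope n b, l y ≤ l w := by
    have h := right_mem_segment ℝ v w; rw [hface] at h; exact h
  obtain ⟨β, hβ, hwβ⟩ := extremePoints_convexHull_subset hwvert
  have hβ1 : ∀ i, 1 ≤ β i := hβ.1
  have hv' : v = fun i => ((gpat b k (π⁻¹ i) : ℕ) : ℝ) := by
    rw [hv]; funext i
    simp [gpat, apply_ite (fun t : ℕ => (t : ℝ))]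
  -- value of v at π i
  have hvπ : ∀ i : Fin n, v (π i) = ((gpat b k i : ℕ) : ℝ) := by
    intro i; rw [hv']; simp
  have hwπ : ∀ i : Fin n, w (π i) = ((β (π i) : ℕ) : ℝ) := by
    intro i; rw [hwβ]
  -- CASE A
  by_cases hA : ∃ j : Fin n, (j : ℕ) < k ∧ l (Pi.single (π j) (1 : ℝ)) = 0
  · obtain ⟨j, hj, hcj⟩ := hA
    left
    have hS2 : 2 ≤ Spart b k := two_le_Spart n b hb hcase (by omega) le_rfl hk
    set u : Fin n → ℝ :=
      fun i => (((if π⁻¹ i = j then Spart b k else gpat b k (π⁻¹ i)) : ℕ) : ℝ) with hu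
    have huP : u ∈ bpfPolytope n b := f1_mem n b hb π k hk j hj
    have hud : u = v + ((Spart b k : ℝ) - 1) • (Pi.single (π j) (1 : ℝ) : Fin n → ℝ) := by
      rw [hv']; exact diff1 n b π k j hj
    have hlu : l u = l v := by
      rw [hud, map_add, map_smul, hcj]; simp
    have huseg : u ∈ segment ℝ v w := by
      rw [hface]; exact ⟨huP, fun y hy => hlu ▸ hvmax.2 y hy⟩
    have hune : u ≠ v := by
      intro he
      rw [he] at hud
      have h2 := congrFun hud (π j)
      simp only [Pi.add_apply, Pi.smul_apply, Pi.single_eq_same, smul_eq_mul, mul_one] at h2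
      have : (2 : ℝ) ≤ (Spart b k : ℝ) := by exact_mod_cast hS2
      linarith
    obtain ⟨t, ht1, htw⟩ := seg_dir huseg hune
    have hwv : w - v = (t * ((Spart b k : ℝ) - 1)) • (Pi.single (π j) (1 : ℝ) : Fin n → ℝ) := by
      rw [htw, hud]
      rw [add_sub_cancel_left, smul_smul]
    have hβval : (β (π j) : ℝ) = 1 + t * ((Spart b k : ℝ) - 1) := by
      have h2 := congrFun hwv (π j)
      simp only [Pi.sub_apply, Pi.smul_apply, Pi.single_eq_same, smul_eq_mul, mul_one] at h2
      have h3 : v (π j) = 1 := by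
        rw [hvπ j]; simp [gpat, hj]
      have h4 := hwπ j
      rw [h3, h4] at h2
      linarith
    have hβub : β (π j) ≤ Spart b k := by
      by_contra hgt
      push_neg at hgt
      have hcount := count_exceed n b β hβ k
      have hsub : insert (π j)
          (((Finset.univ : Finset (Fin n)).filter (fun i : Fin n => k ≤ (i : ℕ))).image π)
          ⊆ (Finset.univ : Finset (Fin n)).filter (fun i : Fin n => Spart b k < β i) := by
        intro x hx
        simp only [Finset.mem_insert, Finset.mem_image, Finset.mem_filter, Finset.mem_univ,
          true_and] at hx ⊢
        rcases hx with rfl | ⟨i, hi, rfl⟩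
        · exact hgt
        · have hvw : w (π i) = v (π i) := by
            have h2 := congrFun hwv (π i)
            have hne2 : π i ≠ π j := fun hc => by
              have := π.injective hc; omega
            simp only [Pi.sub_apply, Pi.smul_apply, Pi.single_eq_of_ne hne2, smul_eq_mul,
              mul_zero] at h2
            linarith
          have : (β (π i) : ℝ) = ((Spart b ((i : ℕ) + 1) : ℕ) : ℝ) := by
            rw [← hwπ i, hvw, hvπ i]
            rw [show gpat b k i = Spart b ((i : ℕ) + 1) from if_neg (by omega : ¬ ((i : ℕ) < k))]
          have hββ : β (π i) = Spart b ((i : ℕ) + 1) := by exact_mod_cast this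
          rw [hββ]
          exact Spart_lt n b hb (by omega) (by omega)
      have hcard := Finset.card_le_card hsub
      rw [Finset.card_insert_of_notMem (by
        simp only [Finset.mem_image, Finset.mem_filter, Finset.mem_univ, true_and, not_exists]
        intro i hi
        rcases hi with ⟨h5, h6⟩
        cases π.injective h6
        omega),
        Finset.card_image_of_injective _ π.injective, card_filter_ge] at hcard
      omega
    have hteq : t * ((Spart b k : ℝ) - 1) = (Spart b k : ℝ) - 1 := by
      have h1 : (1 : ℝ) + t * ((Spart b k : ℝ) - 1) ≤ (Spart b k : ℝ) := by
        rw [← hβval]; exact_mod_cast hβub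
      have h2 : (2 : ℝ) ≤ (Spart b k : ℝ) := by exact_mod_cast hS2
      nlinarith
    exact ⟨j, hj, by rw [hwv, hteq]⟩
  -- CASE B
  by_cases hB : ∃ h : k < n, l (Pi.single (π (⟨k, h⟩ : Fin n)) (1 : ℝ)) = 0
  · obtain ⟨hkn, hck⟩ := hB
    right; right
    refine ⟨hkn, ?_⟩
    have hS2 : 2 ≤ Spart b (k + 1) := two_le_Spart n b hb hcase (by omega) (by omega) (by omega)
    set u : Fin n → ℝ := fun i => ((gpat b (k + 1) (π⁻¹ i) : ℕ) : ℝ) with hu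
    have huP : u ∈ bpfPolytope n b := gpat_mem n b hb π (k + 1)
    have hud : u = v + (-((Spart b (k + 1) : ℝ) - 1)) •
        (Pi.single (π (⟨k, hkn⟩ : Fin n)) (1 : ℝ) : Fin n → ℝ) := by
      rw [hv']; exact diff3 n b π k hkn
    have hlu : l u = l v := by
      rw [hud, map_add, map_smul, hck]; simp
    have huseg : u ∈ segment ℝ v w := by
      rw [hface]; exact ⟨huP, fun y hy => hlu ▸ hvmax.2 y hy⟩
    have hune : u ≠ v := by
      intro he
      rw [he] at hud
      have h2 := congrFun hud (π (⟨k, hkn⟩ : Fin n))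
      simp only [Pi.add_apply, Pi.smul_apply, Pi.single_eq_same, smul_eq_mul, mul_one] at h2
      have : (2 : ℝ) ≤ (Spart b (k + 1) : ℝ) := by exact_mod_cast hS2
      linarith
    obtain ⟨t, ht1, htw⟩ := seg_dir huseg hune
    have hwv : w - v = (t * (-((Spart b (k + 1) : ℝ) - 1))) •
        (Pi.single (π (⟨k, hkn⟩ : Fin n)) (1 : ℝ) : Fin n → ℝ) := by
      rw [htw, hud, add_sub_cancel_left, smul_smul]
    have hβval : (β (π (⟨k, hkn⟩ : Fin n)) : ℝ)
        = (Spart b (k + 1) : ℝ) - t * ((Spart b (k + 1) : ℝ) - 1) := by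
      have h2 := congrFun hwv (π (⟨k, hkn⟩ : Fin n))
      simp only [Pi.sub_apply, Pi.smul_apply, Pi.single_eq_same, smul_eq_mul, mul_one] at h2
      have h3 : v (π (⟨k, hkn⟩ : Fin n)) = ((Spart b (k + 1) : ℕ) : ℝ) := by
        rw [hvπ]
        rw [show gpat b k (⟨k, hkn⟩ : Fin n) = Spart b (k + 1) from
          if_neg (by simp only []; omega)]
      have h4 := hwπ (⟨k, hkn⟩ : Fin n)
      rw [h3, h4] at h2
      linarith
    have hβlb : (1 : ℝ) ≤ (β (π (⟨k, hkn⟩ : Fin n)) : ℝ) := by exact_mod_cast hβ1 _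
    have hteq : t * ((Spart b (k + 1) : ℝ) - 1) = (Spart b (k + 1) : ℝ) - 1 := by
      have h2 : (2 : ℝ) ≤ (Spart b (k + 1) : ℝ) := by exact_mod_cast hS2
      nlinarith [hβval, hβlb, ht1]
    rw [hwv]
    rw [show t * (-((Spart b (k + 1) : ℝ) - 1)) = -(t * ((Spart b (k + 1) : ℝ) - 1)) by ring,
      hteq]
  -- CASE C
  by_cases hC : ∃ m : ℕ, ∃ h2 : m < n, k + 1 ≤ m ∧
      l (Pi.single (π (⟨m - 1, by omega⟩ : Fin n)) (1 : ℝ))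
        = l (Pi.single (π (⟨m, h2⟩ : Fin n)) (1 : ℝ))
  · obtain ⟨m, hm2, hm1, hcm⟩ := hC
    right; left
    have hbm : 1 ≤ b m := hb m hm2
    set u : Fin n → ℝ := fun i =>
      ((gpat b k (Equiv.swap (⟨m - 1, by omega⟩ : Fin n) (⟨m, hm2⟩ : Fin n) (π⁻¹ i)) : ℕ) : ℝ)
      with hu
    have huP : u ∈ bpfPolytope n b := f2_mem n b hb π k m hm1 hm2
    have hud : u = v + (b m : ℝ) •
        ((Pi.single (π (⟨m - 1, by omega⟩ : Fin n)) (1 : ℝ) : Fin n → ℝ)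
          - (Pi.single (π (⟨m, hm2⟩ : Fin n)) (1 : ℝ) : Fin n → ℝ)) := by
      rw [hv']; exact diff2 n b π k m hm1 hm2
    have hlu : l u = l v := by
      rw [hud, map_add, map_smul, map_sub, hcm]; simp
    have huseg : u ∈ segment ℝ v w := by
      rw [hface]; exact ⟨huP, fun y hy => hlu ▸ hvmax.2 y hy⟩
    have hπne : π (⟨m - 1, by omega⟩ : Fin n) ≠ π (⟨m, hm2⟩ : Fin n) := by
      intro hc
      have h5 := congrArg Fin.val (π.injective hc)
      simp only [] at h5
      omega
    have hune : u ≠ v := by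
      intro he
      rw [he] at hud
      have h2 := congrFun hud (π (⟨m - 1, by omega⟩ : Fin n))
      simp only [Pi.add_apply, Pi.smul_apply, Pi.sub_apply, Pi.single_eq_same,
        Pi.single_eq_of_ne hπne, smul_eq_mul] at h2
      have : (1 : ℝ) ≤ (b m : ℝ) := by exact_mod_cast hbm
      linarith
    obtain ⟨t, ht1, htw⟩ := seg_dir huseg hune
    have hwv : w - v = (t * (b m : ℝ)) •
        ((Pi.single (π (⟨m - 1, by omega⟩ : Fin n)) (1 : ℝ) : Fin n → ℝ)
          - (Pi.single (π (⟨m, hm2⟩ : Fin n)) (1 : ℝ) : Fin n → ℝ)) := by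
      rw [htw, hud, add_sub_cancel_left, smul_smul]
    have hSm : Spart b (m + 1) = Spart b m + b m := by
      unfold Spart; rw [Finset.sum_range_succ]
    have hβval : (β (π (⟨m - 1, by omega⟩ : Fin n)) : ℝ) = (Spart b m : ℝ) + t * (b m : ℝ) := by
      have h2 := congrFun hwv (π (⟨m - 1, by omega⟩ : Fin n))
      simp only [Pi.sub_apply, Pi.smul_apply, Pi.single_eq_same,
        Pi.single_eq_of_ne hπne, smul_eq_mul] at h2
      have h3 : v (π (⟨m - 1, by omega⟩ : Fin n)) = ((Spart b m : ℕ) : ℝ) := by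
        rw [hvπ]
        rw [show gpat b k (⟨m - 1, by omega⟩ : Fin n) = Spart b ((m - 1) + 1) from
          if_neg (by simp only []; omega)]
        rw [show m - 1 + 1 = m by omega]
      have h4 := hwπ (⟨m - 1, by omega⟩ : Fin n)
      rw [h3, h4] at h2
      linarith
    have hβub : β (π (⟨m - 1, by omega⟩ : Fin n)) ≤ Spart b (m + 1) := by
      by_contra hgt
      push_neg at hgt
      have hcount := count_exceed n b β hβ (m + 1)
      have hsub : insert (π (⟨m - 1, by omega⟩ : Fin n))
          (((Finset.univ : Finset (Fin n)).filter (fun i : Fin n => m + 1 ≤ (i : ℕ))).image π)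
          ⊆ (Finset.univ : Finset (Fin n)).filter (fun i : Fin n => Spart b (m + 1) < β i) := by
        intro x hx
        simp only [Finset.mem_insert, Finset.mem_image, Finset.mem_filter, Finset.mem_univ,
          true_and] at hx ⊢
        rcases hx with rfl | ⟨i, hi, rfl⟩
        · exact hgt
        · have hne1 : π i ≠ π (⟨m - 1, by omega⟩ : Fin n) := by
            intro hc
            have h5 := congrArg Fin.val (π.injective hc)
            simp only [] at h5
            omega
          have hne2 : π i ≠ π (⟨m, hm2⟩ : Fin n) := by
            intro hc
            have h5 := congrArg Fin.val (π.injective hc)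
            simp only [] at h5
            omega
          have hvw : w (π i) = v (π i) := by
            have h2 := congrFun hwv (π i)
            simp only [Pi.sub_apply, Pi.smul_apply, Pi.single_eq_of_ne hne1,
              Pi.single_eq_of_ne hne2, smul_eq_mul] at h2
            linarith
          have : (β (π i) : ℝ) = ((Spart b ((i : ℕ) + 1) : ℕ) : ℝ) := by
            rw [← hwπ i, hvw, hvπ i]
            rw [show gpat b k i = Spart b ((i : ℕ) + 1) from if_neg (by omega : ¬ ((i : ℕ) < k))]
          have hββ : β (π i) = Spart b ((i : ℕ) + 1) := by exact_mod_cast this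
          rw [hββ]
          exact Spart_lt n b hb (by omega) (by omega)
      have hcard := Finset.card_le_card hsub
      rw [Finset.card_insert_of_notMem (by
        simp only [Finset.mem_image, Finset.mem_filter, Finset.mem_univ, true_and, not_exists]
        intro i hi
        rcases hi with ⟨h5, h6⟩
        have h7 := congrArg Fin.val (π.injective h6)
        simp only [] at h7
        omega),
        Finset.card_image_of_injective _ π.injective, card_filter_ge] at hcard
      omega
    have hteq : t * (b m : ℝ) = (b m : ℝ) := by
      have h1 : (Spart b m : ℝ) + t * (b m : ℝ) ≤ (Spart b (m + 1) : ℝ) := by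
        rw [← hβval]; exact_mod_cast hβub
      have h2 : (Spart b (m + 1) : ℝ) = (Spart b m : ℝ) + (b m : ℝ) := by
        rw [hSm]; push_cast; ring
      have h3 : (1 : ℝ) ≤ (b m : ℝ) := by exact_mod_cast hbm
      nlinarith
    refine ⟨(⟨m, hm2⟩ : Fin n), hm1, ?_⟩
    rw [hwv, hteq]
  -- CASE D : no ties, show w = v, contradiction
  exfalso
  push_neg at hA hB hC
  -- the coefficient function
  set c : ℕ → ℝ := fun m => if h : m < n then l (Pi.single (π (⟨m, h⟩ : Fin n)) (1 : ℝ)) else 0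
    with hcdef
  have hcc : ∀ i : Fin n, c (i : ℕ) = l (Pi.single (π i) (1 : ℝ)) := by
    intro i
    simp only [hcdef, dif_pos i.isLt, Fin.eta]
  -- sign facts
  have hsign1 : ∀ j : Fin n, (j : ℕ) < k → l (Pi.single (π j) (1 : ℝ)) < 0 := by
    intro j hj
    have hS2 : 2 ≤ Spart b k := two_le_Spart n b hb hcase (by omega) le_rfl hk
    have huP := f1_mem n b hb π k hk j hj
    have hud : (fun i => (((if π⁻¹ i = j then Spart b k else gpat b k (π⁻¹ i)) : ℕ) : ℝ))
        = v + ((Spart b k : ℝ) - 1) • (Pi.single (π j) (1 : ℝ) : Fin n → ℝ) := by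
      rw [hv']; exact diff1 n b π k j hj
    have hle := hvmax.2 _ huP
    rw [hud, map_add, map_smul, smul_eq_mul] at hle
    have h2 : (2 : ℝ) ≤ (Spart b k : ℝ) := by exact_mod_cast hS2
    have h3 := hA j hj
    rcases lt_or_ge (l (Pi.single (π j) (1 : ℝ))) 0 with h | h
    · exact h
    · exfalso
      have h4 : l (Pi.single (π j) (1 : ℝ)) = 0 := by nlinarith
      exact h3 h4
  have hsign2 : ∀ hkn : k < n, 0 < l (Pi.single (π (⟨k, hkn⟩ : Fin n)) (1 : ℝ)) := by
    intro hkn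
    have hS2 : 2 ≤ Spart b (k + 1) := two_le_Spart n b hb hcase (by omega) (by omega) (by omega)
    have huP := gpat_mem n b hb π (k + 1)
    have hud : (fun i => ((gpat b (k + 1) (π⁻¹ i) : ℕ) : ℝ))
        = v + (-((Spart b (k + 1) : ℝ) - 1)) •
          (Pi.single (π (⟨k, hkn⟩ : Fin n)) (1 : ℝ) : Fin n → ℝ) := by
      rw [hv']; exact diff3 n b π k hkn
    have hle := hvmax.2 _ huP
    rw [hud, map_add, map_smul, smul_eq_mul] at hle
    have h2 : (2 : ℝ) ≤ (Spart b (k + 1) : ℝ) := by exact_mod_cast hS2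
    have h3 := hB hkn
    rcases lt_or_ge 0 (l (Pi.single (π (⟨k, hkn⟩ : Fin n)) (1 : ℝ))) with h | h
    · exact h
    · exfalso
      have h4 : l (Pi.single (π (⟨k, hkn⟩ : Fin n)) (1 : ℝ)) = 0 := by nlinarith
      exact h3 h4
  have hsign3 : ∀ m : ℕ, ∀ hm2 : m < n, k + 1 ≤ m →
      l (Pi.single (π (⟨m - 1, by omega⟩ : Fin n)) (1 : ℝ))
        < l (Pi.single (π (⟨m, hm2⟩ : Fin n)) (1 : ℝ)) := by
    intro m hm2 hm1
    have hbm : 1 ≤ b m := hb m hm2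
    have huP := f2_mem n b hb π k m hm1 hm2
    have hud : (fun i =>
        ((gpat b k (Equiv.swap (⟨m - 1, by omega⟩ : Fin n) (⟨m, hm2⟩ : Fin n) (π⁻¹ i)) : ℕ) : ℝ))
        = v + (b m : ℝ) • ((Pi.single (π (⟨m - 1, by omega⟩ : Fin n)) (1 : ℝ) : Fin n → ℝ)
            - (Pi.single (π (⟨m, hm2⟩ : Fin n)) (1 : ℝ) : Fin n → ℝ)) := by
      rw [hv']; exact diff2 n b π k m hm1 hm2
    have hle := hvmax.2 _ huP
    rw [hud, map_add, map_smul, map_sub, smul_eq_mul] at hle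
    have h2 : (1 : ℝ) ≤ (b m : ℝ) := by exact_mod_cast hbm
    have h3 := hC m hm2 hm1
    rcases lt_or_ge (l (Pi.single (π (⟨m - 1, by omega⟩ : Fin n)) (1 : ℝ)))
      (l (Pi.single (π (⟨m, hm2⟩ : Fin n)) (1 : ℝ))) with h | h
    · exact h
    · exfalso
      apply h3
      nlinarith
  -- l w = l v
  have hlwv : l w = l v := le_antisymm (hvmax.2 w hwmax.1) (hwmax.2 v hvmax.1)
  set E : Fin n → ℝ := fun i => w (π i) - v (π i) with hEdef
  have hE0 : ∑ i : Fin n, E i * c (i : ℕ) = 0 := by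
    have hfw : l w = ∑ i : Fin n, w (π i) * l (Pi.single (π i) (1 : ℝ)) :=
      (clm_formula n l w).trans (Equiv.sum_comp π (fun j => w j * l (Pi.single j (1 : ℝ)))).symm
    have hfv : l v = ∑ i : Fin n, v (π i) * l (Pi.single (π i) (1 : ℝ)) :=
      (clm_formula n l v).trans (Equiv.sum_comp π (fun j => v j * l (Pi.single j (1 : ℝ)))).symm
    have : ∑ i : Fin n, E i * c (i : ℕ)
        = ∑ i : Fin n, (w (π i) * l (Pi.single (π i) (1 : ℝ))
            - v (π i) * l (Pi.single (π i) (1 : ℝ))) := by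
      refine Finset.sum_congr rfl (fun i _ => ?_)
      simp only [hEdef]
      rw [hcc i]
      ring
    rw [this, Finset.sum_sub_distrib, ← hfw, ← hfv, hlwv, sub_self]
  set G : ℕ → ℝ :=
    fun m => ∑ i ∈ (Finset.univ : Finset (Fin n)).filter (fun i : Fin n => m ≤ (i : ℕ)), E i
    with hGdef
  have hGle : ∀ m : ℕ, k ≤ m → G m ≤ 0 := by
    intro m hm
    have hnat := sum_part_le n b β hβ π m
    have hsplit : G m
        = (∑ i ∈ (Finset.univ : Finset (Fin n)).filter (fun i : Fin n => m ≤ (i : ℕ)),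
            ((β (π i) : ℕ) : ℝ))
          - ∑ i ∈ (Finset.univ : Finset (Fin n)).filter (fun i : Fin n => m ≤ (i : ℕ)),
              ((Spart b ((i : ℕ) + 1) : ℕ) : ℝ) := by
      rw [hGdef, ← Finset.sum_sub_distrib]
      refine Finset.sum_congr rfl (fun i hi => ?_)
      simp only [Finset.mem_filter, Finset.mem_univ, true_and] at hi
      simp only [hEdef]
      have h1 := hwπ i
      have h2 : v (π i) = ((Spart b ((i : ℕ) + 1) : ℕ) : ℝ) := by
        rw [hvπ i]
        rw [show gpat b k i = Spart b ((i : ℕ) + 1) from if_neg (by omega : ¬ ((i : ℕ) < k))]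
      rw [h1, h2]
    rw [hsplit, sub_nonpos]
    exact_mod_cast hnat
  have habel := abel_identity n E c n k (by omega)
  have hfilterne : (Finset.univ : Finset (Fin n)).filter (fun i : Fin n => ¬ (i : ℕ) < k)
      = (Finset.univ : Finset (Fin n)).filter (fun i : Fin n => k ≤ (i : ℕ)) := by
    ext i
    simp only [Finset.mem_filter, Finset.mem_univ, true_and, not_lt]
  have hsplitall := Finset.sum_filter_add_sum_filter_not (Finset.univ : Finset (Fin n))
    (fun i : Fin n => (i : ℕ) < k) (fun i => E i * c (i : ℕ))
  rw [hfilterne, habel] at hsplitall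
  rw [hE0] at hsplitall
  have hkey : (∑ i ∈ (Finset.univ : Finset (Fin n)).filter (fun i : Fin n => (i : ℕ) < k),
        E i * c (i : ℕ))
      + (c k * G k + ∑ j ∈ Finset.Ico (k + 1) n, (c j - c (j - 1)) * G j) = 0 := by
    simp only [hGdef]
    exact hsplitall
  -- nonpositivity of each piece
  have hterm1 : ∀ i ∈ (Finset.univ : Finset (Fin n)).filter (fun i : Fin n => (i : ℕ) < k),
      E i * c (i : ℕ) ≤ 0 := by
    intro i hi
    simp only [Finset.mem_filter, Finset.mem_univ, true_and] at hi
    have hEnn : 0 ≤ E i := by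
      simp only [hEdef]
      have h1 := hwπ i
      have h2 : v (π i) = 1 := by
        rw [hvπ i]
        rw [show gpat b k i = 1 from if_pos hi]
        norm_num
      rw [h1, h2]
      have := hβ1 (π i)
      simp only [sub_nonneg]
      exact_mod_cast this
    have hcneg : c (i : ℕ) ≤ 0 := by
      rw [hcc i]
      exact le_of_lt (hsign1 i hi)
    exact mul_nonpos_of_nonneg_of_nonpos hEnn hcneg
  have hsum1le : ∑ i ∈ (Finset.univ : Finset (Fin n)).filter (fun i : Fin n => (i : ℕ) < k),
      E i * c (i : ℕ) ≤ 0 := Finset.sum_nonpos hterm1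
  have hckGk : c k * G k ≤ 0 := by
    rcases lt_or_ge k n with hkn | hkn
    · refine mul_nonpos_of_nonneg_of_nonpos ?_ (hGle k le_rfl)
      rw [hcdef]
      simp only [dif_pos hkn]
      exact le_of_lt (hsign2 hkn)
    · rw [hcdef]
      simp only [dif_neg (by omega : ¬ k < n)]
      simp
  have hterm3 : ∀ j ∈ Finset.Ico (k + 1) n, (c j - c (j - 1)) * G j ≤ 0 := by
    intro j hj
    rw [Finset.mem_Ico] at hj
    refine mul_nonpos_of_nonneg_of_nonpos ?_ (hGle j (by omega))
    have h1 := hsign3 j hj.2 hj.1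
    rw [hcdef]
    simp only [dif_pos hj.2, dif_pos (by omega : j - 1 < n)]
    linarith [h1]
  have hsum3le : ∑ j ∈ Finset.Ico (k + 1) n, (c j - c (j - 1)) * G j ≤ 0 :=
    Finset.sum_nonpos hterm3
  -- each piece is zero
  have hsum1eq : ∑ i ∈ (Finset.univ : Finset (Fin n)).filter (fun i : Fin n => (i : ℕ) < k),
      E i * c (i : ℕ) = 0 := by linarith [hkey]
  have hckGkeq : c k * G k = 0 := by linarith [hkey]
  have hsum3eq : ∑ j ∈ Finset.Ico (k + 1) n, (c j - c (j - 1)) * G j = 0 := by linarith [hkey]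
  -- E i = 0 for i < k
  have hE1 : ∀ i : Fin n, (i : ℕ) < k → E i = 0 := by
    intro i hi
    have h := (Finset.sum_eq_zero_iff_of_nonpos hterm1).1 hsum1eq i
      (by simp only [Finset.mem_filter, Finset.mem_univ, true_and]; exact hi)
    rcases mul_eq_zero.1 h with h | h
    · exact h
    · exfalso
      rw [hcc i] at h
      exact absurd h (ne_of_lt (hsign1 i hi))
  -- G m = 0 for all m ≥ k
  have hG0 : ∀ m : ℕ, k ≤ m → G m = 0 := by
    intro m hm
    rcases le_or_gt n m with hnm | hmn
    · simp only [hGdef]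
      rw [filter_ge_empty n m hnm]
      simp
    rcases eq_or_lt_of_le hm with rfl | hlt
    · -- m = k < n
      rcases mul_eq_zero.1 hckGkeq with h | h
      · exfalso
        rw [hcdef] at h
        simp only [dif_pos hmn] at h
        exact absurd h (ne_of_gt (hsign2 hmn))
      · exact h
    · -- k + 1 ≤ m < n
      have h := (Finset.sum_eq_zero_iff_of_nonpos hterm3).1 hsum3eq m
        (Finset.mem_Ico.2 ⟨hlt, hmn⟩)
      rcases mul_eq_zero.1 h with h | h
      · exfalso
        have h1 := hsign3 m hmn hlt
        rw [hcdef] at h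
        simp only [dif_pos hmn, dif_pos (by omega : m - 1 < n)] at h
        linarith
      · exact h
  -- E i = 0 for all i
  have hEall : ∀ i : Fin n, E i = 0 := by
    intro i
    rcases lt_or_ge (i : ℕ) k with h | h
    · exact hE1 i h
    · have hsucc : G (i : ℕ) = E i + G ((i : ℕ) + 1) := by
        simp only [hGdef]
        rw [filter_ge_succ n (i : ℕ) i.isLt,
          Finset.sum_insert (mk_not_mem_filter_succ n (i : ℕ) i.isLt)]
      have h1 := hG0 (i : ℕ) h
      have h2 := hG0 ((i : ℕ) + 1) (by omega)
      rw [h1, h2] at hsucc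
      linarith
  apply hne
  funext x
  have h := hEall (π⁻¹ x)
  simp only [hEdef] at h
  simp only [Equiv.Perm.coe_inv, Equiv.apply_symm_apply] at h
  linarith
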